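/- Let f₁, f₂ : ℝ^d → ℝ be differentiable with curvatures in [μ₁, L₁] and [μ₂, L₂] respectively (μ₁ < L₁, μ₂ < L₂), with μ₁ + μ₂ > 0 and L₂ + μ₂ ≤ 0. Let x⁰, …, x^{N+1} be generated by DCA (∇f₁(x^{k+1}) = ∇f₂(x^k)), N ≥ 1. Then (1/2)‖x^N − x^{N+1}‖² ≤ (F(x⁰) − F(x^{N+1})) / (μ₁ + μ₂ + μ₁·E_N(μ₂/μ₁)), where E_N(z) = Σ_{j=1}^{2N} z^{−j} and F = f₁ − f₂. -/

import Mathlib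

open Set

noncomputable def E (N : ℕ) (z : ℝ) : ℝ := ∑ j ∈ Finset.Icc 1 (2 * N), z ^ (-(j : ℤ))

section Aux

open RealInnerProductSpace

variable {V : Type*} [NormedAddCommGroup V] [InnerProductSpace ℝ V] [CompleteSpace V]

lemma sc_lb {f : V → ℝ} (hf : Differentiable ℝ f) {μ : ℝ}
    (hc : ConvexOn ℝ univ (fun z => f z - μ / 2 * ‖z‖ ^ 2)) (x y : V) :
    f x + ⟪gradient f x, y - x⟫ + μ / 2 * ‖y - x‖ ^ 2 ≤ f y := by
  set v := y - x with hv
  set g : V → ℝ := fun z => f z - μ / 2 * ‖z‖ ^ 2 with hg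
  have hψc : ConvexOn ℝ univ (fun t : ℝ => g (t • v + x)) := by
    have h := hc.comp_affineMap (AffineMap.lineMap x y : ℝ →ᵃ[ℝ] V)
    have he : (fun t : ℝ => g (t • v + x)) = (g ∘ (AffineMap.lineMap x y : ℝ →ᵃ[ℝ] V)) := by
      funext t
      simp [AffineMap.lineMap_apply, hv, Function.comp, add_comm]
    rw [he]
    simpa using h
  have hline : HasDerivAt (fun t : ℝ => t • v + x) v 0 := by
    simpa using ((hasDerivAt_id (0:ℝ)).smul_const v).add_const x
  have hd1 : HasDerivAt (fun t : ℝ => f (t • v + x)) ⟪gradient f x, v⟫ 0 := by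
    have hgr : HasFDerivAt f (InnerProductSpace.toDual ℝ V (gradient f x)) x :=
      (hf x).hasGradientAt
    have h0 : ((0:ℝ) • v + x) = x := by simp
    rw [← h0] at hgr
    simpa [InnerProductSpace.toDual_apply_apply, Function.comp_def] using hgr.comp_hasDerivAt 0 hline
  have hd2 : HasDerivAt (fun t : ℝ => μ / 2 * ‖t • v + x‖ ^ 2) (μ * ⟪v, x⟫) 0 := by
    have he : (fun t : ℝ => μ / 2 * ‖t • v + x‖ ^ 2)
        = fun t : ℝ => μ / 2 * (t ^ 2 * ‖v‖ ^ 2 + 2 * (t * ⟪v, x⟫) + ‖x‖ ^ 2) := by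
      funext t
      rw [norm_add_sq_real, norm_smul, real_inner_smul_left]
      ring_nf
      simp [mul_pow]
      ring_nf
    rw [he]
    have h1 : HasDerivAt (fun t : ℝ => t ^ 2 * ‖v‖ ^ 2) 0 0 := by
      simpa using (hasDerivAt_pow 2 (0:ℝ)).mul_const (‖v‖ ^ 2)
    have h2 : HasDerivAt (fun t : ℝ => 2 * (t * ⟪v, x⟫)) (2 * ⟪v, x⟫) 0 := by
      simpa using ((hasDerivAt_id (0:ℝ)).mul_const ⟪v, x⟫).const_mul 2
    have := (((h1.add h2).add_const (‖x‖ ^ 2)).const_mul (μ / 2))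
    rw [show μ * ⟪v, x⟫ = μ / 2 * (0 + 2 * ⟪v, x⟫) by ring]
    exact this
  have hψd : HasDerivAt (fun t : ℝ => g (t • v + x)) (⟪gradient f x, v⟫ - μ * ⟪v, x⟫) 0 :=
    hd1.sub hd2
  have hslope := hψc.le_slope_of_hasDerivAt (mem_univ (0:ℝ)) (mem_univ (1:ℝ)) one_pos hψd
  rw [slope_def_field] at hslope
  have e1 : ((1:ℝ) • v + x) = y := by rw [hv]; module
  have e0 : ((0:ℝ) • v + x) = x := by simp
  simp only [e1, e0] at hslope
  have hnorm : ‖v‖ ^ 2 = ‖y‖ ^ 2 - 2 * ⟪y, x⟫ + ‖x‖ ^ 2 := by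
    rw [hv, norm_sub_sq_real]
  have hinner : ⟪v, x⟫ = ⟪y, x⟫ - ‖x‖ ^ 2 := by
    rw [hv, inner_sub_left, real_inner_self_eq_norm_sq]
  simp only [hg] at hslope
  norm_num at hslope
  rw [hinner] at hslope
  rw [hnorm, inner_gradient_left]
  linarith

lemma gradient_neg' {f : V → ℝ} {x : V} (hf : DifferentiableAt ℝ f x) :
    gradient (fun z => -f z) x = -gradient f x := by
  have h : HasGradientAt (fun z => -f z) (-gradient f x) x := by
    rw [hasGradientAt_iff_hasFDerivAt, map_neg]
    exact hf.hasGradientAt.neg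
  exact h.gradient

lemma smooth_ub {f : V → ℝ} (hf : Differentiable ℝ f) {L : ℝ}
    (hc : ConvexOn ℝ univ (fun z => L / 2 * ‖z‖ ^ 2 - f z)) (x y : V) :
    f y ≤ f x + ⟪gradient f x, y - x⟫ + L / 2 * ‖y - x‖ ^ 2 := by
  have hc' : ConvexOn ℝ univ (fun z => (-f z) - (-L) / 2 * ‖z‖ ^ 2) := by
    have he : (fun z : V => (-f z) - (-L) / 2 * ‖z‖ ^ 2)
        = (fun z => L / 2 * ‖z‖ ^ 2 - f z) := by
      funext z; ring
    rw [he]; exact hc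
  have h := sc_lb (f := fun z => -f z) hf.neg hc' x y
  rw [gradient_neg' (hf x), inner_neg_left] at h
  linarith

set_option linter.unusedSectionVars false in
lemma cocoercive (g : V → ℝ) (G : V → V) (L : ℝ) (hL : 0 < L)
    (hlow : ∀ x y, g x + ⟪G x, y - x⟫ ≤ g y)
    (hup : ∀ x y, g y ≤ g x + ⟪G x, y - x⟫ + L / 2 * ‖y - x‖ ^ 2) (a b : V) :
    ‖G a - G b‖ ^ 2 ≤ L * ⟪G a - G b, a - b⟫ := by
  have hc : L * (1 / L) = 1 := by field_simp
  have key : ∀ p q : V, g p + ⟪G p, q - p⟫ + 1 / (2 * L) * ‖G q - G p‖ ^ 2 ≤ g q := by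
    intro p q
    set c : ℝ := 1 / L with hcc
    set u := G q - G p with hu
    set w := q - c • u with hw
    have h1 := hup q w
    have h2 := hlow p w
    have e1 : w - q = -(c • u) := by rw [hw]; abel
    have e2 : ⟪G q, w - q⟫ = -(c * ⟪G q, u⟫) := by
      rw [e1, inner_neg_right, real_inner_smul_right]
    have e3 : ‖w - q‖ ^ 2 = c ^ 2 * ‖u‖ ^ 2 := by
      rw [e1, norm_neg, norm_smul, mul_pow, Real.norm_eq_abs, sq_abs]
    have e4 : ⟪G p, w - p⟫ = ⟪G p, q - p⟫ - c * ⟪G p, u⟫ := by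
      rw [hw, show q - c • u - p = (q - p) - c • u from by abel, inner_sub_right,
        real_inner_smul_right]
    have e5 : c * ⟪G q, u⟫ - c * ⟪G p, u⟫ = c * ‖u‖ ^ 2 := by
      have : ⟪G q, u⟫ - ⟪G p, u⟫ = ‖u‖ ^ 2 := by
        rw [← inner_sub_left, ← hu, real_inner_self_eq_norm_sq]
      linear_combination c * this
    have e6 : L / 2 * (c ^ 2 * ‖u‖ ^ 2) = c / 2 * ‖u‖ ^ 2 := by
      have hc' : L * c = 1 := hc
      linear_combination (c * ‖u‖ ^ 2 / 2) * hc'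
    have e7 : (1 : ℝ) / (2 * L) = c / 2 := by rw [hcc]; ring
    rw [e2, e3, e6] at h1
    rw [e4] at h2
    rw [e7]
    linarith
  have k1 := key a b
  have k2 := key b a
  have hn : ‖G b - G a‖ = ‖G a - G b‖ := norm_sub_rev _ _
  rw [hn] at k1
  have e8 : ⟪G a, b - a⟫ = -⟪G a, a - b⟫ := by rw [← inner_neg_right, neg_sub]
  have e9 : ⟪G a - G b, a - b⟫ = ⟪G a, a - b⟫ - ⟪G b, a - b⟫ := inner_sub_left _ _ _
  have h6 : 1 / (2 * L) * ‖G a - G b‖ ^ 2 + 1 / (2 * L) * ‖G a - G b‖ ^ 2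
      ≤ ⟪G a, a - b⟫ - ⟪G b, a - b⟫ := by
    rw [e8] at k1; linarith
  have h7 := mul_le_mul_of_nonneg_left h6 hL.le
  have e10 : L * (1 / (2 * L) * ‖G a - G b‖ ^ 2 + 1 / (2 * L) * ‖G a - G b‖ ^ 2)
      = ‖G a - G b‖ ^ 2 := by
    field_simp
    ring
  rw [e10] at h7
  rw [e9]
  linarith [h7]

lemma grad_lipschitz {f : V → ℝ} (hf : Differentiable ℝ f) {μ L : ℝ} (hμL : μ < L)
    (hLμ : L + μ ≤ 0)
    (hcL : ConvexOn ℝ univ (fun z => L / 2 * ‖z‖ ^ 2 - f z))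
    (hcμ : ConvexOn ℝ univ (fun z => f z - μ / 2 * ‖z‖ ^ 2)) (a b : V) :
    ‖gradient f a - gradient f b‖ ≤ -μ * ‖a - b‖ := by
  set G : V → V := fun z => gradient f z - μ • z with hG
  have e1 : ∀ x y : V, ⟪G x, y - x⟫ = ⟪gradient f x, y - x⟫ - μ * ⟪x, y - x⟫ := by
    intro x y; simp [hG, inner_sub_left, real_inner_smul_left]
  have e2 : ∀ x y : V, ‖y - x‖ ^ 2 = ‖y‖ ^ 2 - 2 * ⟪y, x⟫ + ‖x‖ ^ 2 := fun x y =>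
    norm_sub_sq_real y x
  have e3 : ∀ x y : V, ⟪x, y - x⟫ = ⟪y, x⟫ - ‖x‖ ^ 2 := by
    intro x y
    rw [inner_sub_right, real_inner_self_eq_norm_sq, real_inner_comm]
  have hlow : ∀ x y : V, (f x - μ/2 * ‖x‖^2) + ⟪G x, y - x⟫ ≤ f y - μ/2 * ‖y‖^2 := by
    intro x y
    have h := sc_lb hf hcμ x y
    rw [e2 x y] at h
    rw [e1 x y, e3 x y]
    linarith
  have hup : ∀ x y : V, (f y - μ/2 * ‖y‖^2)
      ≤ (f x - μ/2 * ‖x‖^2) + ⟪G x, y - x⟫ + (L - μ) / 2 * ‖y - x‖^2 := by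
    intro x y
    have h := smooth_ub hf hcL x y
    rw [e2 x y] at h
    rw [e1 x y, e3 x y, e2 x y]
    linarith
  have hcoco := cocoercive (fun z => f z - μ/2 * ‖z‖^2) G (L - μ) (by linarith) hlow hup a b
  set p := gradient f a - gradient f b with hp
  set w := a - b with hw
  have eG : G a - G b = p - μ • w := by
    simp only [hG, hp, hw, smul_sub]
    abel
  have f1 : ‖G a - G b‖ ^ 2 = ‖p‖ ^ 2 - 2 * μ * ⟪p, w⟫ + μ ^ 2 * ‖w‖ ^ 2 := by
    rw [eG, norm_sub_sq_real, real_inner_smul_right, norm_smul, mul_pow,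
      Real.norm_eq_abs, sq_abs]
    ring
  have f2 : ⟪G a - G b, w⟫ = ⟪p, w⟫ - μ * ‖w‖ ^ 2 := by
    rw [eG, inner_sub_left, real_inner_smul_left, real_inner_self_eq_norm_sq]
  rw [f1, f2] at hcoco
  have hcs' : -(‖p‖ * ‖w‖) ≤ ⟪p, w⟫ := neg_le_of_neg_le (by
    have := abs_real_inner_le_norm p w
    have h := abs_le.mp this
    linarith [h.1])
  have hwn : (0:ℝ) ≤ ‖w‖ := norm_nonneg w
  have hpn : (0:ℝ) ≤ ‖p‖ := norm_nonneg p
  have hprod : (L + μ) * (⟪p, w⟫ + ‖p‖ * ‖w‖) ≤ 0 :=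
    mul_nonpos_iff.mpr (Or.inr ⟨hLμ, by linarith⟩)
  have key : (‖p‖ + μ * ‖w‖) * (‖p‖ + L * ‖w‖) ≤ 0 := by nlinarith [hcoco, hprod]
  by_contra hcon
  push_neg at hcon
  have h1 : 0 < ‖p‖ + μ * ‖w‖ := by linarith
  have h2 : 0 < ‖p‖ + L * ‖w‖ := by
    nlinarith [mul_nonneg (le_of_lt (by linarith : (0:ℝ) < L - μ)) hwn]
  linarith [mul_pos h1 h2]

end Aux

lemma E_eq (z : ℝ) (hz : z ≠ 0) (N : ℕ) :
    E N z = (1 + z) * ∑ i ∈ Finset.range N, ((z⁻¹) ^ 2) ^ (i + 1) := by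
  have hW : ∀ M : ℕ, E M z = ∑ j ∈ Finset.Icc 1 (2 * M), (z⁻¹) ^ j := by
    intro M
    unfold E
    refine Finset.sum_congr rfl fun j _ => ?_
    rw [zpow_neg, zpow_natCast, inv_pow]
  induction N with
  | zero => simp [E]
  | succ n ih =>
    rw [hW] at ih ⊢
    have h2 : 2 * (n + 1) = (2 * n + 1) + 1 := by ring
    rw [h2, Finset.sum_Icc_succ_top (by omega), Finset.sum_Icc_succ_top (by omega), ih,
      Finset.sum_range_succ]
    have hzw : z * z⁻¹ = 1 := mul_inv_cancel₀ hz
    set w := z⁻¹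
    have key : w ^ (2 * n + 1) + w ^ (2 * n + 1 + 1) = (1 + z) * (w ^ 2) ^ (n + 1) := by
      have hpow : (w ^ 2) ^ (n + 1) = w ^ (2 * n + 1 + 1) := by
        rw [← pow_mul]; ring_nf
      rw [hpow]
      linear_combination (-(w ^ (2 * n + 1))) * hzw
    linear_combination key

open RealInnerProductSpace

theorem stmt_16 {d : ℕ} (f₁ f₂ : EuclideanSpace ℝ (Fin d) → ℝ) (μ₁ L₁ μ₂ L₂ : ℝ)
    (hf₁ : Differentiable ℝ f₁) (hf₂ : Differentiable ℝ f₂)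
    (h₁ : μ₁ < L₁) (h₂ : μ₂ < L₂)
    (hsum : μ₁ + μ₂ > 0) (hL₂μ₂ : L₂ + μ₂ ≤ 0)
    (hcL₁ : ConvexOn ℝ univ (fun x => L₁ / 2 * ‖x‖ ^ 2 - f₁ x))
    (hcμ₁ : ConvexOn ℝ univ (fun x => f₁ x - μ₁ / 2 * ‖x‖ ^ 2))
    (hcL₂ : ConvexOn ℝ univ (fun x => L₂ / 2 * ‖x‖ ^ 2 - f₂ x))
    (hcμ₂ : ConvexOn ℝ univ (fun x => f₂ x - μ₂ / 2 * ‖x‖ ^ 2))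
    (N : ℕ) (hN : N ≥ 1) (x : ℕ → EuclideanSpace ℝ (Fin d))
    (hDCA : ∀ k ≤ N, gradient f₁ (x (k + 1)) = gradient f₂ (x k)) :
    (1 / 2) * ‖x N - x (N + 1)‖ ^ 2 ≤
      ((f₁ (x 0) - f₂ (x 0)) - (f₁ (x (N + 1)) - f₂ (x (N + 1)))) /
        (μ₁ + μ₂ + μ₁ * E N (μ₂ / μ₁)) := by
  have hμ₂ : μ₂ < 0 := by linarith
  have hμ₁ : 0 < μ₁ := by linarith
  have hμ₁ne : μ₁ ≠ 0 := ne_of_gt hμ₁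
  have hμ₂ne : μ₂ ≠ 0 := ne_of_lt hμ₂
  set D : ℕ → ℝ := fun k => ‖x (k + 1) - x k‖ with hD
  set r : ℝ := (-μ₂) / μ₁ with hr
  have hr0 : 0 < r := div_pos (by linarith) hμ₁
  have hlip : ∀ a b, ‖gradient f₂ a - gradient f₂ b‖ ≤ (-μ₂) * ‖a - b‖ :=
    grad_lipschitz hf₂ h₂ hL₂μ₂ hcL₂ hcμ₂
  have hmono : ∀ a b : EuclideanSpace ℝ (Fin d),
      μ₁ * ‖a - b‖ ^ 2 ≤ ⟪gradient f₁ a - gradient f₁ b, a - b⟫ := by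
    intro a b
    have h1 := sc_lb hf₁ hcμ₁ a b
    have h2 := sc_lb hf₁ hcμ₁ b a
    have e : ⟪gradient f₁ a - gradient f₁ b, a - b⟫
        = -⟪gradient f₁ a, b - a⟫ - ⟪gradient f₁ b, a - b⟫ := by
      have h3 : ⟪gradient f₁ a, a - b⟫ = -⟪gradient f₁ a, b - a⟫ := by
        rw [← inner_neg_right, neg_sub]
      rw [inner_sub_left, h3]
    have hnr : ‖b - a‖ = ‖a - b‖ := norm_sub_rev _ _
    rw [hnr] at h1
    rw [e]
    linarith
  have hdec : ∀ k, k ≤ N → (μ₁ + μ₂) / 2 * D k ^ 2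
      ≤ (f₁ (x k) - f₂ (x k)) - (f₁ (x (k + 1)) - f₂ (x (k + 1))) := by
    intro k hk
    have h1 := sc_lb hf₁ hcμ₁ (x (k + 1)) (x k)
    have h2 := sc_lb hf₂ hcμ₂ (x k) (x (k + 1))
    rw [hDCA k hk] at h1
    have e : ⟪gradient f₂ (x k), x k - x (k + 1)⟫
        = -⟪gradient f₂ (x k), x (k + 1) - x k⟫ := by
      rw [← inner_neg_right, neg_sub]
    rw [e, norm_sub_rev] at h1
    simp only [hD]
    linarith
  have hcontr : ∀ k, k + 1 ≤ N → D (k + 1) ≤ r * D k := by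
    intro k hk
    have hm := hmono (x (k + 2)) (x (k + 1))
    have hd1 : gradient f₁ (x (k + 1 + 1)) = gradient f₂ (x (k + 1)) := hDCA (k + 1) hk
    have hd0 : gradient f₁ (x (k + 1)) = gradient f₂ (x k) := hDCA k (by omega)
    rw [show k + 2 = k + 1 + 1 from rfl, hd1, hd0] at hm
    have hcs := real_inner_le_norm (gradient f₂ (x (k + 1)) - gradient f₂ (x k))
      (x (k + 1 + 1) - x (k + 1))
    have hl := hlip (x (k + 1)) (x k)
    have h3 : μ₁ * ‖x (k + 1 + 1) - x (k + 1)‖ ^ 2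
        ≤ (-μ₂) * ‖x (k + 1) - x k‖ * ‖x (k + 1 + 1) - x (k + 1)‖ := by
      have h5 : ‖gradient f₂ (x (k + 1)) - gradient f₂ (x k)‖ * ‖x (k + 1 + 1) - x (k + 1)‖
          ≤ ((-μ₂) * ‖x (k + 1) - x k‖) * ‖x (k + 1 + 1) - x (k + 1)‖ :=
        mul_le_mul_of_nonneg_right hl (norm_nonneg _)
      linarith [hm, hcs, h5]
    rcases eq_or_lt_of_le (norm_nonneg (x (k + 1 + 1) - x (k + 1))) with h0 | h0
    · simp only [hD, ← h0]
      exact mul_nonneg hr0.le (norm_nonneg _)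
    · have h4 : μ₁ * ‖x (k + 1 + 1) - x (k + 1)‖ ≤ (-μ₂) * ‖x (k + 1) - x k‖ := by
        nlinarith [h3, h0]
      simp only [hD, hr]
      rw [div_mul_eq_mul_div, le_div_iff₀ hμ₁]
      linarith [h4]
  have hgeom : ∀ m k, k + m ≤ N → D (k + m) ≤ r ^ m * D k := by
    intro m
    induction m with
    | zero =>
      intro k _
      simp
    | succ n ih =>
      intro k hk
      have h1 := hcontr (k + n) (by omega)
      have h2 := ih k (by omega)
      have e : k + (n + 1) = (k + n) + 1 := by omega
      rw [e]
      calc D ((k + n) + 1) ≤ r * D (k + n) := h1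
        _ ≤ r * (r ^ n * D k) := mul_le_mul_of_nonneg_left h2 hr0.le
        _ = r ^ (n + 1) * D k := by ring
  set ρ : ℝ := ((μ₂ / μ₁)⁻¹) ^ 2 with hρ
  have hρ0 : 0 ≤ ρ := sq_nonneg _
  have hρr : ρ * r ^ 2 = 1 := by
    rw [hρ, hr]
    field_simp
  have hsq : ∀ k, k ≤ N → ρ ^ (N - k) * D N ^ 2 ≤ D k ^ 2 := by
    intro k hk
    have h := hgeom (N - k) k (by omega)
    rw [show k + (N - k) = N from by omega] at h
    have hDN : 0 ≤ D N := norm_nonneg _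
    have h2 : D N ^ 2 ≤ (r ^ (N - k)) ^ 2 * D k ^ 2 := by
      nlinarith [h, hDN, pow_nonneg hr0.le (N - k), norm_nonneg (x (k + 1) - x k)]
    have hone : ρ ^ (N - k) * (r ^ (N - k)) ^ 2 = 1 := by
      have hcomm : (r ^ (N - k)) ^ 2 = (r ^ 2) ^ (N - k) := by
        rw [← pow_mul, ← pow_mul, Nat.mul_comm]
      rw [hcomm, ← mul_pow, hρr, one_pow]
    calc ρ ^ (N - k) * D N ^ 2 ≤ ρ ^ (N - k) * ((r ^ (N - k)) ^ 2 * D k ^ 2) :=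
          mul_le_mul_of_nonneg_left h2 (pow_nonneg hρ0 _)
      _ = (ρ ^ (N - k) * (r ^ (N - k)) ^ 2) * D k ^ 2 := by ring
      _ = D k ^ 2 := by rw [hone, one_mul]
  set S : ℝ := ∑ i ∈ Finset.range (N + 1), ρ ^ i with hS
  have hsum1 : S * D N ^ 2 ≤ ∑ k ∈ Finset.range (N + 1), D k ^ 2 := by
    have h1 : ∑ k ∈ Finset.range (N + 1), ρ ^ (N - k) * D N ^ 2
        ≤ ∑ k ∈ Finset.range (N + 1), D k ^ 2 :=
      Finset.sum_le_sum (fun k hk => hsq k (Nat.lt_succ_iff.mp (Finset.mem_range.mp hk)))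
    have h2 : ∑ k ∈ Finset.range (N + 1), ρ ^ (N - k) * D N ^ 2 = S * D N ^ 2 := by
      rw [← Finset.sum_mul, hS]
      congr 1
      exact Finset.sum_range_reflect (fun i => ρ ^ i) (N + 1)
    linarith [h1, h2]
  have htel : (μ₁ + μ₂) / 2 * ∑ k ∈ Finset.range (N + 1), D k ^ 2
      ≤ (f₁ (x 0) - f₂ (x 0)) - (f₁ (x (N + 1)) - f₂ (x (N + 1))) := by
    have h1 : ∑ k ∈ Finset.range (N + 1), (μ₁ + μ₂) / 2 * D k ^ 2
        ≤ ∑ k ∈ Finset.range (N + 1),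
            ((f₁ (x k) - f₂ (x k)) - (f₁ (x (k + 1)) - f₂ (x (k + 1)))) :=
      Finset.sum_le_sum (fun k hk => hdec k (Nat.lt_succ_iff.mp (Finset.mem_range.mp hk)))
    rw [Finset.sum_range_sub' (fun k => f₁ (x k) - f₂ (x k)) (N + 1)] at h1
    rw [Finset.mul_sum]
    exact h1
  have hEz := E_eq (μ₂ / μ₁) (div_ne_zero hμ₂ne hμ₁ne) N
  have hμz : μ₁ * (1 + μ₂ / μ₁) = μ₁ + μ₂ := by field_simp
  have hSsplit : S = (∑ i ∈ Finset.range N, ρ ^ (i + 1)) + 1 := by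
    rw [hS, Finset.sum_range_succ']
    simp
  have hden : μ₁ + μ₂ + μ₁ * E N (μ₂ / μ₁) = (μ₁ + μ₂) * S := by
    rw [hEz, hSsplit, hρ]
    linear_combination (∑ i ∈ Finset.range N, (((μ₂ / μ₁)⁻¹) ^ 2) ^ (i + 1)) * hμz
  have hS1 : 1 ≤ S := by
    rw [hSsplit]
    have : 0 ≤ ∑ i ∈ Finset.range N, ρ ^ (i + 1) :=
      Finset.sum_nonneg (fun i _ => pow_nonneg hρ0 _)
    linarith
  have hDen : 0 < (μ₁ + μ₂) * S := by nlinarith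
  have hDNeq : ‖x N - x (N + 1)‖ = D N := by
    simp only [hD]
    exact norm_sub_rev _ _
  rw [hden, hDNeq, le_div_iff₀ hDen]
  have hchain : (μ₁ + μ₂) / 2 * (S * D N ^ 2)
      ≤ (f₁ (x 0) - f₂ (x 0)) - (f₁ (x (N + 1)) - f₂ (x (N + 1))) := by
    have := mul_le_mul_of_nonneg_left hsum1 (by linarith : (0:ℝ) ≤ (μ₁ + μ₂) / 2)
    linarith [htel]
  nlinarith [hchain]
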